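/- Let k ≥ 2 and let 2 ≤ ℓ ≤ k. Then every hypergraph sequence of k-uniform hypergraphs satisfying Dev(ℓ) also satisfies CD_{1/2}(ℓ−1) (where CD_{1/2}(ℓ−1) is interpreted for ℓ−1 ≥ 1). -/

import Mathlib

open Filter Finset Asymptotics

/-- A hypergraph sequence: for each `n`, the edge set of a hypergraph
on the vertex set `Fin n`. -/
abbrev HSeq : Type := (n : ℕ) → Finset (Finset (Fin n))

/-- The sequence is `k`-uniform: every edge has exactly `k` vertices. -/
def UniformSeq (k : ℕ) (H : HSeq) : Prop :=
  ∀ n : ℕ, ∀ e ∈ H n, e.card = k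

/-- A proper partition of `k`: an (ordered list representing an unordered) collection of
at least two positive integers summing to `k`. -/
def ProperPartition (k : ℕ) (π : List ℕ) : Prop :=
  2 ≤ π.length ∧ (∀ m ∈ π, 0 < m) ∧ π.sum = k

/-- `π'` is a refinement of `π`: there is a surjection `φ` from the parts of `π'`
to the parts of `π` so that each part of `π` is the sum of its `φ`-preimages. -/
def IsRefinement (π' π : List ℕ) : Prop :=
  ∃ φ : Fin π'.length → Fin π.length, Function.Surjective φ ∧
    ∀ i : Fin π.length, π.get i = ∑ j ∈ Finset.univ.filter (fun j => φ j = i), π'.get j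

/-- `e(S_1, …, S_t)`: the number of tuples `(s_1, …, s_t) ∈ S_1 × ⋯ × S_t` whose
union is an edge of `H`. -/
def eCount {n : ℕ} (H : Finset (Finset (Fin n))) {t : ℕ}
    (S : Fin t → Finset (Finset (Fin n))) : ℕ :=
  ((Fintype.piFinset S).filter (fun s => Finset.univ.biUnion s ∈ H)).card

/-- The property `Expand_p(π)` of a hypergraph sequence. -/
def Expand (k : ℕ) (p : ℝ) (π : List ℕ) (H : HSeq) : Prop :=
  ∃ f : ℕ → ℝ, f =o[atTop] (fun n => (n : ℝ) ^ k) ∧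
    ∀ n : ℕ, ∀ S : Fin π.length → Finset (Finset (Fin n)),
      (∀ i : Fin π.length, ∀ s ∈ S i, s.card = π.get i) →
      |(eCount (H n) S : ℝ) - p * ∏ i : Fin π.length, ((S i).card : ℝ)| ≤ f n

/-- The property `PartiteExpand_p(π)`: the `Expand` estimate is only required when the
vertex sets `V(S_i)` are pairwise disjoint. -/
def PartiteExpand (k : ℕ) (p : ℝ) (π : List ℕ) (H : HSeq) : Prop :=
  ∃ f : ℕ → ℝ, f =o[atTop] (fun n => (n : ℝ) ^ k) ∧
    ∀ n : ℕ, ∀ S : Fin π.length → Finset (Finset (Fin n)),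
      (∀ i : Fin π.length, ∀ s ∈ S i, s.card = π.get i) →
      (∀ i j : Fin π.length, i ≠ j →
        Disjoint ((S i).biUnion id) ((S j).biUnion id)) →
      |(eCount (H n) S : ℝ) - p * ∏ i : Fin π.length, ((S i).card : ℝ)| ≤ f n

/-- `K_k(G)`: the `k`-element vertex subsets all of whose `ℓ`-element subsets are
edges of the `ℓ`-uniform hypergraph `G`. -/
def cliqueSet (k ℓ : ℕ) {n : ℕ} (G : Finset (Finset (Fin n))) : Finset (Finset (Fin n)) :=
  (Finset.powersetCard k (Finset.univ : Finset (Fin n))).filter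
    (fun T => ∀ S ∈ Finset.powersetCard ℓ T, S ∈ G)

/-- The property `CD_p(ℓ)` of a hypergraph sequence. -/
def CD (k : ℕ) (p : ℝ) (ℓ : ℕ) (H : HSeq) : Prop :=
  ∃ f : ℕ → ℝ, f =o[atTop] (fun n => (n : ℝ) ^ k) ∧
    ∀ n : ℕ, ∀ G : Finset (Finset (Fin n)), (∀ e ∈ G, e.card = ℓ) →
      |(((cliqueSet k ℓ G) ∩ H n).card : ℝ) - p * ((cliqueSet k ℓ G).card : ℝ)| ≤ f n

/-- The property `CD_p(ℓ,s)` of a hypergraph sequence: `G` ranges over `ℓ`-uniform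
hypergraphs whose vertex set `W` is a subset of `Fin n`, and one counts `k`-sets
inducing at least `s` edges of `G`. -/
def CDs (k : ℕ) (p : ℝ) (ℓ s : ℕ) (H : HSeq) : Prop :=
  ∃ f : ℕ → ℝ, f =o[atTop] (fun n => (n : ℝ) ^ k) ∧
    ∀ n : ℕ, ∀ W : Finset (Fin n), ∀ G : Finset (Finset (Fin n)),
      (∀ e ∈ G, e.card = ℓ ∧ e ⊆ W) →
      |(((H n).filter (fun T => s ≤ (G.filter (fun e => e ⊆ T)).card)).card : ℝ) -
        p * (((Finset.powersetCard k W).filter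
          (fun T => s ≤ (G.filter (fun e => e ⊆ T)).card)).card : ℝ)| ≤ f n

/-- The `k`-tuple `(x_1, …, x_{k-ℓ}, y_{1,ε_1}, …, y_{ℓ,ε_ℓ})`. -/
def octTuple {n : ℕ} (k ℓ : ℕ) (x : Fin (k - ℓ) → Fin n) (y : Fin ℓ × Fin 2 → Fin n)
    (ε : Fin ℓ → Fin 2) (i : Fin k) : Fin n :=
  if h : (i : ℕ) < k - ℓ then x ⟨(i : ℕ), h⟩
  else
    have hi : (i : ℕ) - (k - ℓ) < ℓ := by have := i.isLt; omega
    y (⟨(i : ℕ) - (k - ℓ), hi⟩, ε ⟨(i : ℕ) - (k - ℓ), hi⟩)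

/-- The squashed octahedron `O[x⃗, y⃗]`: the collection of `k`-element sets of the form
`{x_1, …, x_{k-ℓ}, y_{1,i_1}, …, y_{ℓ,i_ℓ}}`. -/
def octSet {n : ℕ} (k ℓ : ℕ) (x : Fin (k - ℓ) → Fin n)
    (y : Fin ℓ × Fin 2 → Fin n) : Finset (Finset (Fin n)) :=
  (Finset.image (fun ε : Fin ℓ → Fin 2 =>
    Finset.image (octTuple k ℓ x y ε) Finset.univ) Finset.univ).filter
    (fun T => T.card = k)

/-- `Σ (−1)^{|O[x⃗,y⃗] ∩ E(H)|}` over all choices of vertices. -/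
noncomputable def devSum (k ℓ : ℕ) {n : ℕ} (H : Finset (Finset (Fin n))) : ℝ :=
  ∑ x : Fin (k - ℓ) → Fin n, ∑ y : Fin ℓ × Fin 2 → Fin n,
    (-1 : ℝ) ^ ((octSet k ℓ x y ∩ H).card)

/-- The property `Dev(ℓ)` of a hypergraph sequence. -/
def Dev (k ℓ : ℕ) (H : HSeq) : Prop :=
  (fun n => devSum k ℓ (H n)) =o[atTop] (fun n => (n : ℝ) ^ (k + ℓ))

open scoped Classical in
/-- `dev_{ℓ,P}(H)`: the deviation sum restricted to octahedra all of whose `k`-tuples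
lie in `P`. -/
noncomputable def devP (k ℓ : ℕ) {n : ℕ} (H : Finset (Finset (Fin n)))
    (P : Set (Fin k → Fin n)) : ℝ :=
  ∑ x : Fin (k - ℓ) → Fin n, ∑ y : Fin ℓ × Fin 2 → Fin n,
    if ∀ ε : Fin ℓ → Fin 2, octTuple k ℓ x y ε ∈ P then
      (-1 : ℝ) ^ ((octSet k ℓ x y ∩ H).card)
    else 0

/-- `Q ⊆ V(H)^k` is complete in coordinate `i`: membership in `Q` only depends on the
coordinates other than `i`. -/
def CompleteInCoord {n k : ℕ} (Q : Set (Fin k → Fin n)) (i : Fin k) : Prop :=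
  ∃ Q' : Set ({j : Fin k // j ≠ i} → Fin n),
    Q = {z : Fin k → Fin n | (fun j : {j : Fin k // j ≠ i} => z j.1) ∈ Q'}


/-- corner of a box -/
def corner {V : Type} {m : ℕ} (y : Fin m → V × V) (δ : Fin m → Bool) : Fin m → V :=
  fun j => if δ j then (y j).2 else (y j).1

lemma gcs (V : Type) [Fintype V] :
    ∀ (m : ℕ) (α : Type) [Fintype α]
      (σ : α → (Fin m → V) → ℝ) (u : Fin m → α → (Fin m → V) → ℝ),
      (∀ a w, |σ a w| ≤ 1) →
      (∀ j a w, 0 ≤ u j a w ∧ u j a w ≤ 1) →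
      (∀ j a w w', (∀ i, i ≠ j → w i = w' i) → u j a w = u j a w') →
      |∑ a, ∑ w, σ a w * ∏ j, u j a w| ^ (2 ^ m) ≤
        (Fintype.card α : ℝ) ^ (2 ^ m - 1) *
          (Fintype.card V : ℝ) ^ (m * 2 ^ m - 2 * m) *
          |∑ a, ∑ y : Fin m → V × V, ∏ δ : Fin m → Bool, σ a (corner y δ)| := by
  intro m
  induction m with
  | zero =>
    intro α _ σ u hσ hu hind
    simp only [pow_zero, pow_one]
    have h1 : ∀ a, ∑ w : Fin 0 → V, σ a w * ∏ j : Fin 0, u j a w = σ a (fun j => j.elim0) := by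
      intro a
      rw [Finset.sum_unique_nonempty _ _ Finset.univ_nonempty, Finset.prod_of_isEmpty,
        mul_one]
      exact congrArg _ (Subsingleton.elim _ _)
    have h2 : ∀ a, ∑ y : Fin 0 → V × V, ∏ δ : Fin 0 → Bool, σ a (corner y δ) =
        σ a (fun j => j.elim0) := by
      intro a
      rw [Finset.sum_unique_nonempty _ _ Finset.univ_nonempty,
        Finset.prod_unique_nonempty _ _ Finset.univ_nonempty]
      exact congrArg _ (Subsingleton.elim _ _)
    simp only [h1, h2]
    norm_num
  | succ m IH =>
    intro α _ σ u hσ hu hind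
    rcases isEmpty_or_nonempty V with hV | hV
    · haveI : IsEmpty (Fin (m+1) → V) := ⟨fun f => hV.false (f 0)⟩
      haveI : IsEmpty (Fin (m+1) → V × V) := ⟨fun f => hV.false (f 0).1⟩
      rw [Finset.univ_eq_empty (α := Fin (m+1) → V), Finset.univ_eq_empty (α := Fin (m+1) → V × V)]
      simp only [Finset.sum_empty, Finset.sum_const_zero, abs_zero, mul_zero]
      rw [zero_pow (Nat.two_pow_pos (m+1)).ne']
    · obtain ⟨v₀⟩ := hV
      -- helper: splitting sums over (Fin (m+1) → β)
      have hsum_cons : ∀ (β : Type) [Fintype β] (F : (Fin (m+1) → β) → ℝ),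
          ∑ w, F w = ∑ v : β, ∑ w' : Fin m → β, F (Fin.cons v w') := by
        intro β _ F
        rw [← Equiv.sum_comp (Fin.consEquiv (fun _ => β)) F, Fintype.sum_prod_type]
        rfl
      have hprod_cons : ∀ (F : (Fin (m+1) → Bool) → ℝ),
          ∏ δ, F δ = (∏ δ' : Fin m → Bool, F (Fin.cons false δ')) *
            ∏ δ' : Fin m → Bool, F (Fin.cons true δ') := by
        intro F
        rw [← Equiv.prod_comp (Fin.consEquiv (fun _ => Bool)) F, Fintype.prod_prod_type,
          Fintype.prod_bool]
        exact mul_comm _ _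
      set g : α → (Fin m → V) → ℝ := fun a w' =>
        ∑ v : V, σ a (Fin.cons v w') * ∏ j : Fin m, u j.succ a (Fin.cons v w') with hg
      have hu0 : ∀ (a : α) (v : V) (w' : Fin m → V),
          u 0 a (Fin.cons v w') = u 0 a (Fin.cons v₀ w') := by
        intro a v w'
        apply hind
        intro i hi
        cases i using Fin.cases with
        | zero => exact absurd rfl hi
        | succ j => simp [Fin.cons_succ]
      have hsplit : ∑ a, ∑ w, σ a w * ∏ j, u j a w
          = ∑ a, ∑ w' : Fin m → V, u 0 a (Fin.cons v₀ w') * g a w' := by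
        refine Finset.sum_congr rfl fun a _ => ?_
        rw [hsum_cons V _, Finset.sum_comm]
        refine Finset.sum_congr rfl fun w' _ => ?_
        rw [Finset.mul_sum]
        refine Finset.sum_congr rfl fun v _ => ?_
        rw [Fin.prod_univ_succ, hu0 a v w']
        ring
      have habs : |∑ a, ∑ w, σ a w * ∏ j, u j a w| ≤ ∑ a, ∑ w' : Fin m → V, |g a w'| := by
        rw [hsplit]
        refine (Finset.abs_sum_le_sum_abs _ _).trans (Finset.sum_le_sum fun a _ => ?_)
        refine (Finset.abs_sum_le_sum_abs _ _).trans (Finset.sum_le_sum fun w' _ => ?_)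
        rw [abs_mul]
        calc |u 0 a (Fin.cons v₀ w')| * |g a w'| ≤ 1 * |g a w'| := by
              refine mul_le_mul_of_nonneg_right ?_ (abs_nonneg _)
              rw [abs_of_nonneg (hu 0 a _).1]
              exact (hu 0 a _).2
          _ = |g a w'| := one_mul _
      have hCS : (∑ a, ∑ w' : Fin m → V, |g a w'|)^2
          ≤ (Fintype.card α : ℝ) * (Fintype.card V : ℝ)^m *
            ∑ a, ∑ w' : Fin m → V, (g a w')^2 := by
        have hcs := Finset.sum_mul_sq_le_sq_mul_sq (Finset.univ : Finset (α × (Fin m → V)))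
          (fun _ => (1:ℝ)) (fun p => |g p.1 p.2|)
        simp only [one_mul, one_pow, sq_abs] at hcs
        calc (∑ a, ∑ w' : Fin m → V, |g a w'|)^2
            = (∑ p : α × (Fin m → V), |g p.1 p.2|)^2 := by rw [Fintype.sum_prod_type]
          _ ≤ (∑ _p : α × (Fin m → V), (1:ℝ)) * ∑ p : α × (Fin m → V), (g p.1 p.2)^2 := hcs
          _ = (Fintype.card α : ℝ) * (Fintype.card V : ℝ)^m *
              ∑ a, ∑ w' : Fin m → V, (g a w')^2 := by
              rw [Finset.sum_const, Finset.card_univ, Fintype.sum_prod_type]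
              simp [Fintype.card_prod, Fintype.card_fun, Fintype.card_fin]
      set σ' : (α × (V × V)) → (Fin m → V) → ℝ := fun p w' =>
        σ p.1 (Fin.cons p.2.1 w') * σ p.1 (Fin.cons p.2.2 w') with hσ'def
      set u' : Fin m → (α × (V × V)) → (Fin m → V) → ℝ := fun j p w' =>
        u j.succ p.1 (Fin.cons p.2.1 w') * u j.succ p.1 (Fin.cons p.2.2 w') with hu'def
      have hT : ∑ a, ∑ w' : Fin m → V, (g a w')^2
          = ∑ p : α × (V × V), ∑ w' : Fin m → V, σ' p w' * ∏ j : Fin m, u' j p w' := by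
        rw [Fintype.sum_prod_type]
        refine Finset.sum_congr rfl fun a _ => ?_
        calc ∑ w' : Fin m → V, (g a w')^2
            = ∑ w' : Fin m → V, ∑ q : V × V, σ' (a, q) w' * ∏ j : Fin m, u' j (a, q) w' := by
              refine Finset.sum_congr rfl fun w' _ => ?_
              rw [sq]
              simp only [hg]
              rw [Finset.sum_mul_sum, Fintype.sum_prod_type]
              refine Finset.sum_congr rfl fun v0 _ => Finset.sum_congr rfl fun v1 _ => ?_
              simp only [hσ'def, hu'def, Finset.prod_mul_distrib]
              ring
          _ = ∑ q : V × V, ∑ w' : Fin m → V, σ' (a, q) w' * ∏ j : Fin m, u' j (a, q) w' :=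
              Finset.sum_comm
      have hσ'b : ∀ p w', |σ' p w'| ≤ 1 := by
        intro p w'
        rw [hσ'def]
        simp only
        rw [abs_mul]
        exact mul_le_one₀ (hσ _ _) (abs_nonneg _) (hσ _ _)
      have hu'b : ∀ j p w', 0 ≤ u' j p w' ∧ u' j p w' ≤ 1 := fun j p w' =>
        ⟨mul_nonneg (hu _ _ _).1 (hu _ _ _).1,
         mul_le_one₀ (hu _ _ _).2 (hu _ _ _).1 (hu _ _ _).2⟩
      have hind' : ∀ j p w' w'', (∀ i, i ≠ j → w' i = w'' i) → u' j p w' = u' j p w'' := by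
        intro j p w' w'' hag
        have h1 : ∀ v : V, ∀ i : Fin (m+1), i ≠ j.succ →
            (Fin.cons v w' : Fin (m+1) → V) i = (Fin.cons v w'' : Fin (m+1) → V) i := by
          intro v i hi
          cases i using Fin.cases with
          | zero => simp
          | succ i' =>
            simp only [Fin.cons_succ]
            exact hag i' fun h => hi (by rw [h])
        simp only [hu'def]
        rw [hind j.succ p.1 _ _ (h1 _), hind j.succ p.1 _ _ (h1 _)]
      have hIH := IH (α × (V × V)) σ' u' hσ'b hu'b hind'
      have hbox : ∑ p : α × (V × V), ∑ y' : Fin m → V × V, ∏ δ' : Fin m → Bool, σ' p (corner y' δ')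
          = ∑ a, ∑ y : Fin (m+1) → V × V, ∏ δ : Fin (m+1) → Bool, σ a (corner y δ) := by
        rw [Fintype.sum_prod_type]
        refine Finset.sum_congr rfl fun a _ => ?_
        rw [hsum_cons (V × V) _]
        refine Finset.sum_congr rfl fun vv _ => ?_
        refine Finset.sum_congr rfl fun y' _ => ?_
        rw [hprod_cons]
        have hc : ∀ (b : Bool) (δ' : Fin m → Bool),
            corner (Fin.cons vv y') (Fin.cons b δ')
              = Fin.cons (if b then vv.2 else vv.1) (corner y' δ') := by
          intro b δ'
          funext i
          cases i using Fin.cases with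
          | zero => simp [corner]
          | succ i' => simp [corner, Fin.cons_succ]
        simp only [hc, if_true, if_false]
        simp only [hσ'def, Finset.prod_mul_distrib]
        simp
      -- assemble
      have hT0 : (0:ℝ) ≤ ∑ a, ∑ w' : Fin m → V, (g a w')^2 :=
        Finset.sum_nonneg fun a _ => Finset.sum_nonneg fun w' _ => sq_nonneg _
      have hS0 : (0:ℝ) ≤ ∑ a, ∑ w' : Fin m → V, |g a w'| :=
        Finset.sum_nonneg fun a _ => Finset.sum_nonneg fun w' _ => abs_nonneg _
      have hA0 : (0:ℝ) ≤ (Fintype.card α : ℝ) := Nat.cast_nonneg _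
      have hN0 : (0:ℝ) ≤ (Fintype.card V : ℝ) := Nat.cast_nonneg _
      set A := (Fintype.card α : ℝ)
      set N := (Fintype.card V : ℝ)
      set T := ∑ a, ∑ w' : Fin m → V, (g a w')^2 with hTdef
      set B := |∑ a, ∑ y : Fin (m+1) → V × V, ∏ δ : Fin (m+1) → Bool, σ a (corner y δ)| with hBdef
      have hcard : (Fintype.card (α × (V × V)) : ℝ) = A * (N * N) := by
        rw [Fintype.card_prod, Fintype.card_prod]
        push_cast
        ring
      have hIH2 : T ^ (2^m) ≤ (A * (N * N))^(2^m - 1) * N^(m * 2^m - 2*m) * B := by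
        have := hIH
        rw [hcard, hbox] at this
        calc T ^ (2^m) = |∑ p : α × (V × V), ∑ w' : Fin m → V,
              σ' p w' * ∏ j : Fin m, u' j p w'| ^ (2^m) := by
              rw [← hT, abs_of_nonneg hT0]
          _ ≤ _ := this
      have key1 : 2^m + (2^m - 1) = 2^(m+1) - 1 := by
        have h1t : (1:ℕ) ≤ 2^m := Nat.one_le_two_pow
        have hR : 2^(m+1) = 2^m + 2^m := by ring
        omega
      have key2 : m*2^m + (2*(2^m-1) + (m*2^m - 2*m)) = (m+1)*2^(m+1) - 2*(m+1) := by
        have hR : (m+1)*2^(m+1) = 2*(m*2^m) + 2*2^m := by ring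
        have h1t : (1:ℕ) ≤ 2^m := Nat.one_le_two_pow
        have h2m : 2*m ≤ m*2^m := by
          rcases Nat.eq_zero_or_pos m with h|h
          · simp [h]
          · have h2 : 2 ≤ 2^m := by
              have := Nat.one_lt_two_pow_iff.mpr (by omega : m ≠ 0)
              omega
            calc 2*m = m*2 := by ring
              _ ≤ m*2^m := Nat.mul_le_mul (le_refl m) h2
        omega
      have hL2 : |∑ a, ∑ w, σ a w * ∏ j, u j a w|^2 ≤ A * N^m * T :=
        (pow_le_pow_left₀ (abs_nonneg _) habs 2).trans hCS
      calc |∑ a, ∑ w, σ a w * ∏ j, u j a w| ^ (2^(m+1))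
          = (|∑ a, ∑ w, σ a w * ∏ j, u j a w|^2)^(2^m) := by
            rw [← pow_mul]
            congr 1
            ring
        _ ≤ (A * N^m * T)^(2^m) := pow_le_pow_left₀ (sq_nonneg _) hL2 _
        _ = (A * N^m)^(2^m) * T^(2^m) := mul_pow _ _ _
        _ ≤ (A * N^m)^(2^m) * ((A * (N * N))^(2^m - 1) * N^(m * 2^m - 2*m) * B) := by
            refine mul_le_mul_of_nonneg_left hIH2 (by positivity)
        _ = A^(2^(m+1) - 1) * N^((m+1) * 2^(m+1) - 2*(m+1)) * B := by
            rw [mul_pow, ← pow_mul, mul_pow]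
            rw [← key1, ← key2, pow_add, pow_add, pow_add]
            rw [show (N*N)^(2^m-1) = N^(2*(2^m-1)) by rw [pow_mul, pow_two]]
            ring


lemma pow_le_descFactorial_add (n : ℕ) : ∀ m : ℕ, n^m ≤ n.descFactorial m + m*m*n^(m-1) := by
  intro m
  induction m with
  | zero => simp
  | succ m IH =>
    have hdf : n * n.descFactorial m = n.descFactorial (m+1) + m * n.descFactorial m := by
      rcases le_or_gt m n with h | h
      · rw [Nat.descFactorial_succ]
        have : n - m + m = n := by omega
        calc n * n.descFactorial m = ((n-m) + m) * n.descFactorial m := by rw [this]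
          _ = (n-m) * n.descFactorial m + m * n.descFactorial m := by ring
      · rw [Nat.descFactorial_eq_zero_iff_lt.mpr h,
          Nat.descFactorial_eq_zero_iff_lt.mpr (by omega)]
        simp
    have hdle : n.descFactorial m ≤ n^m := Nat.descFactorial_le_pow n m
    calc n^(m+1) = n * n^m := by ring
      _ ≤ n * (n.descFactorial m + m*m*n^(m-1)) := Nat.mul_le_mul_left n IH
      _ = n * n.descFactorial m + m*m*(n*n^(m-1)) := by ring
      _ ≤ n * n.descFactorial m + m*m*n^m := by
          have hnn : m*m*(n*n^(m-1)) ≤ m*m*n^m := by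
            rcases Nat.eq_zero_or_pos m with h | h
            · simp [h]
            · have : n * n^(m-1) = n^m := by
                rw [← pow_succ']
                congr 1
                omega
              rw [this]
          omega
      _ = n.descFactorial (m+1) + (m * n.descFactorial m + m*m*n^m) := by rw [hdf]; ring
      _ ≤ n.descFactorial (m+1) + (m * n^m + m*m*n^m) := by gcongr
      _ ≤ n.descFactorial (m+1) + (m+1)*(m+1)*n^((m+1)-1) := by
          have : (m+1)-1 = m := by omega
          rw [this]
          have : m * n^m + m*m*n^m ≤ (m+1)*(m+1)*n^m := by nlinarith [Nat.zero_le (n^m)]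
          omega

lemma noninj_card_le (ι : Type) [Fintype ι] [DecidableEq ι] (n : ℕ) :
    ((Finset.univ : Finset (ι → Fin n)).filter (fun f => ¬ Function.Injective f)).card
      ≤ (Fintype.card ι)^2 * n^(Fintype.card ι - 1) := by
  classical
  have htot := Finset.card_filter_add_card_filter_not
    (s := (Finset.univ : Finset (ι → Fin n))) (p := fun f => Function.Injective f)
  have hinj : ((Finset.univ : Finset (ι → Fin n)).filter
      (fun f => Function.Injective f)).card = n.descFactorial (Fintype.card ι) := by
    rw [← Fintype.card_subtype]
    rw [Fintype.card_congr (Equiv.subtypeInjectiveEquivEmbedding ι (Fin n))]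
    rw [Fintype.card_embedding_eq, Fintype.card_fin]
  have hcard : (Finset.univ : Finset (ι → Fin n)).card = n^(Fintype.card ι) := by
    rw [Finset.card_univ, Fintype.card_fun, Fintype.card_fin]
  have harith := pow_le_descFactorial_add n (Fintype.card ι)
  have h2 : (Fintype.card ι)^2 * n^(Fintype.card ι - 1)
      = (Fintype.card ι)*(Fintype.card ι)*n^(Fintype.card ι - 1) := by ring
  omega

lemma fiber_card {n : ℕ} (k : ℕ) (T : Finset (Fin n)) (hT : T.card = k) :
    ((Finset.univ : Finset (Fin k → Fin n)).filter
      (fun z => Function.Injective z ∧ Finset.image z Finset.univ = T)).card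
      = k.factorial := by
  classical
  have hTcard : Fintype.card {x // x ∈ T} = k := by rw [Fintype.card_coe, hT]
  set eT := T.orderIsoOfFin hT with heT
  rw [show k.factorial = (Finset.univ : Finset (Equiv.Perm (Fin k))).card by
    rw [Finset.card_univ, Fintype.card_perm, Fintype.card_fin]]
  refine Finset.card_bij'
    (fun z hz =>
      (Equiv.ofBijective (fun i => (⟨z i, by
          rw [← (Finset.mem_filter.mp hz).2.2]
          exact Finset.mem_image_of_mem z (Finset.mem_univ i)⟩ : {x // x ∈ T})) (by
        have hinj := (Finset.mem_filter.mp hz).2.1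
        rw [Fintype.bijective_iff_injective_and_card]
        exact ⟨fun i j hij => hinj (congrArg Subtype.val hij),
          by rw [hTcard, Fintype.card_fin]⟩)).trans eT.toEquiv.symm)
    (fun p _ => fun i => (eT (p i) : Fin n)) (fun z hz => Finset.mem_univ _) ?_ ?_ ?_
  · intro p _
    rw [Finset.mem_filter]
    refine ⟨Finset.mem_univ _, ?_, ?_⟩
    · intro i j hij
      exact p.injective (eT.injective (Subtype.ext hij))
    · apply Finset.eq_of_subset_of_card_le
      · intro x hx
        rw [Finset.mem_image] at hx
        obtain ⟨i, -, rfl⟩ := hx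
        exact (eT (p i)).2
      · rw [hT, Finset.card_image_of_injective _
          (fun i j hij => p.injective (eT.injective (Subtype.ext hij)))]
        simp
  · intro z hz
    funext i
    simp
  · intro p hp
    ext i
    simp [Equiv.trans_apply, Equiv.ofBijective_apply]


section App

variable {n : ℕ}

def sgnH {n k : ℕ} (Hn : Finset (Finset (Fin n))) (z : Fin k → Fin n) : ℝ :=
  if Finset.image z Finset.univ ∈ Hn then 1 else -1

lemma sgnH_abs {k : ℕ} (Hn : Finset (Finset (Fin n))) (z : Fin k → Fin n) :
    |sgnH Hn z| ≤ 1 := by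
  rw [sgnH]
  split <;> norm_num

def tup (k ℓ : ℕ) {n : ℕ} (a : Fin (k - ℓ) → Fin n) (w : Fin ℓ → Fin n) : Fin k → Fin n :=
  octTuple k ℓ a (fun p => w p.1) (fun _ => 0)

lemma tup_lt (k ℓ : ℕ) (a : Fin (k - ℓ) → Fin n) (w : Fin ℓ → Fin n) (i : Fin k)
    (h : (i : ℕ) < k - ℓ) : tup k ℓ a w i = a ⟨i.1, h⟩ := by
  rw [tup, octTuple, dif_pos h]

lemma tup_ge (k ℓ : ℕ) (a : Fin (k - ℓ) → Fin n) (w : Fin ℓ → Fin n) (i : Fin k)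
    (h : ¬ (i : ℕ) < k - ℓ) (hi : (i : ℕ) - (k - ℓ) < ℓ) :
    tup k ℓ a w i = w ⟨(i : ℕ) - (k - ℓ), hi⟩ := by
  rw [tup, octTuple, dif_neg h]

def oidx (k ℓ : ℕ) (hℓk : ℓ ≤ k) (j : Fin ℓ) : Fin k :=
  ⟨k - ℓ + j.1, by have := j.2; omega⟩

lemma oidx_injective (k ℓ : ℕ) (hℓk : ℓ ≤ k) : Function.Injective (oidx k ℓ hℓk) := by
  intro i j hij
  have := congrArg Fin.val hij
  simp only [oidx] at this
  exact Fin.ext (by omega)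

def jsel (k ℓ : ℕ) (hℓk : ℓ ≤ k) (hℓ : 1 ≤ ℓ) (B : Finset (Fin k)) : Fin ℓ :=
  if h : (Finset.univ.filter (fun j : Fin ℓ => oidx k ℓ hℓk j ∉ B)).Nonempty
  then (Finset.univ.filter (fun j : Fin ℓ => oidx k ℓ hℓk j ∉ B)).min' h
  else ⟨0, hℓ⟩

lemma jsel_spec (k ℓ : ℕ) (hℓk : ℓ ≤ k) (hℓ : 1 ≤ ℓ) (B : Finset (Fin k))
    (hB : B.card < ℓ) : oidx k ℓ hℓk (jsel k ℓ hℓk hℓ B) ∉ B := by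
  have hne : (Finset.univ.filter (fun j : Fin ℓ => oidx k ℓ hℓk j ∉ B)).Nonempty := by
    by_contra h
    rw [Finset.not_nonempty_iff_eq_empty, Finset.filter_eq_empty_iff] at h
    push_neg at h
    have himg : Finset.image (oidx k ℓ hℓk) Finset.univ ⊆ B := by
      intro x hx
      rw [Finset.mem_image] at hx
      obtain ⟨j, -, rfl⟩ := hx
      exact h (Finset.mem_univ j)
    have : ℓ ≤ B.card := by
      calc ℓ = (Finset.image (oidx k ℓ hℓk) Finset.univ).card := by
            rw [Finset.card_image_of_injective _ (oidx_injective k ℓ hℓk),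
              Finset.card_univ, Fintype.card_fin]
        _ ≤ B.card := Finset.card_le_card himg
    omega
  rw [jsel, dif_pos hne]
  exact (Finset.mem_filter.mp (Finset.min'_mem _ hne)).2

def ufac (k ℓ : ℕ) (hℓk : ℓ ≤ k) (hℓ : 1 ≤ ℓ) {n : ℕ} (G : Finset (Finset (Fin n)))
    (j : Fin ℓ) (a : Fin (k - ℓ) → Fin n) (w : Fin ℓ → Fin n) : ℝ :=
  ∏ B ∈ (Finset.powersetCard (ℓ-1) Finset.univ).filter (fun B => jsel k ℓ hℓk hℓ B = j),
    (if Finset.image (tup k ℓ a w) B ∈ G then (1:ℝ) else 0)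

lemma ufac_bounds (k ℓ : ℕ) (hℓk : ℓ ≤ k) (hℓ : 1 ≤ ℓ) (G : Finset (Finset (Fin n)))
    (j : Fin ℓ) (a : Fin (k - ℓ) → Fin n) (w : Fin ℓ → Fin n) :
    0 ≤ ufac k ℓ hℓk hℓ G j a w ∧ ufac k ℓ hℓk hℓ G j a w ≤ 1 := by
  constructor
  · apply Finset.prod_nonneg
    intro B _
    split <;> norm_num
  · apply Finset.prod_le_one
    · intro B _
      split <;> norm_num
    · intro B _
      split <;> norm_num

lemma ufac_indep (k ℓ : ℕ) (hℓk : ℓ ≤ k) (hℓ : 1 ≤ ℓ) (G : Finset (Finset (Fin n)))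
    (j : Fin ℓ) (a : Fin (k - ℓ) → Fin n) (w w' : Fin ℓ → Fin n)
    (hw : ∀ i, i ≠ j → w i = w' i) :
    ufac k ℓ hℓk hℓ G j a w = ufac k ℓ hℓk hℓ G j a w' := by
  unfold ufac
  refine Finset.prod_congr rfl fun B hB => ?_
  rw [Finset.mem_filter, Finset.mem_powersetCard] at hB
  obtain ⟨⟨-, hcard⟩, hjB⟩ := hB
  have hnotin : oidx k ℓ hℓk j ∉ B := by
    rw [← hjB]
    exact jsel_spec k ℓ hℓk hℓ B (by omega)
  have himg : Finset.image (tup k ℓ a w) B = Finset.image (tup k ℓ a w') B := by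
    apply Finset.image_congr
    intro i hi
    rcases lt_or_ge i.1 (k - ℓ) with h | h
    · rw [tup_lt k ℓ a w i h, tup_lt k ℓ a w' i h]
    · have hi2 : i.1 - (k - ℓ) < ℓ := by have := i.2; omega
      rw [tup_ge k ℓ a w i (by omega) hi2, tup_ge k ℓ a w' i (by omega) hi2]
      apply hw
      intro hEq
      apply hnotin
      have hiv : i = oidx k ℓ hℓk j := by
        have := congrArg Fin.val hEq
        simp only [oidx] at this ⊢
        exact Fin.ext (by simp only [oidx]; omega)
      rwa [← hiv]
  rw [himg]

lemma ufac_prod (k ℓ : ℕ) (hℓk : ℓ ≤ k) (hℓ : 1 ≤ ℓ) (G : Finset (Finset (Fin n)))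
    (a : Fin (k - ℓ) → Fin n) (w : Fin ℓ → Fin n) :
    ∏ j : Fin ℓ, ufac k ℓ hℓk hℓ G j a w
      = ∏ B ∈ Finset.powersetCard (ℓ-1) Finset.univ,
          (if Finset.image (tup k ℓ a w) B ∈ G then (1:ℝ) else 0) := by
  unfold ufac
  exact Finset.prod_fiberwise_of_maps_to (fun B _ => Finset.mem_univ _) _

lemma clique_indicator (k ℓ : ℕ) (hℓ : 1 ≤ ℓ) (hℓk : ℓ ≤ k) (G : Finset (Finset (Fin n)))
    (z : Fin k → Fin n) (hz : Function.Injective z) :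
    (∏ B ∈ Finset.powersetCard (ℓ-1) Finset.univ,
        (if Finset.image z B ∈ G then (1:ℝ) else 0))
      = if Finset.image z Finset.univ ∈ cliqueSet k (ℓ-1) G then 1 else 0 := by
  classical
  rw [Finset.prod_boole]
  by_cases hmem : Finset.image z Finset.univ ∈ cliqueSet k (ℓ-1) G
  · rw [if_pos hmem, if_pos]
    intro B hB
    rw [Finset.mem_powersetCard] at hB
    obtain ⟨-, hBcard⟩ := hB
    rw [cliqueSet, Finset.mem_filter] at hmem
    refine hmem.2 _ (Finset.mem_powersetCard.mpr ⟨?_, ?_⟩)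
    · exact Finset.image_subset_image (Finset.subset_univ B)
    · rw [Finset.card_image_of_injective _ hz, hBcard]
  · rw [if_neg hmem, if_neg]
    intro hall
    apply hmem
    rw [cliqueSet, Finset.mem_filter]
    constructor
    · refine Finset.mem_powersetCard.mpr ⟨Finset.subset_univ _, ?_⟩
      rw [Finset.card_image_of_injective _ hz, Finset.card_univ, Fintype.card_fin]
    · intro S hS
      rw [Finset.mem_powersetCard] at hS
      obtain ⟨hSsub, hScard⟩ := hS
      set B := Finset.univ.filter (fun i => z i ∈ S) with hBdef
      have himg : Finset.image z B = S := by
        apply Finset.Subset.antisymm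
        · intro x hx
          rw [Finset.mem_image] at hx
          obtain ⟨i, hi, rfl⟩ := hx
          exact (Finset.mem_filter.mp hi).2
        · intro s hs
          have hsu := hSsub hs
          rw [Finset.mem_image] at hsu
          obtain ⟨i, -, rfl⟩ := hsu
          exact Finset.mem_image_of_mem z (Finset.mem_filter.mpr ⟨Finset.mem_univ _, hs⟩)
      have hBcard : B.card = ℓ - 1 := by
        rw [← hScard, ← himg, Finset.card_image_of_injective _ hz]
      have := hall B (Finset.mem_powersetCard.mpr ⟨Finset.subset_univ _, hBcard⟩)
      rwa [himg] at this

lemma tup_bijective (k ℓ : ℕ) (hℓk : ℓ ≤ k) :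
    Function.Bijective
      (fun p : (Fin (k-ℓ) → Fin n) × (Fin ℓ → Fin n) => tup k ℓ p.1 p.2) := by
  rw [Function.bijective_iff_has_inverse]
  refine ⟨fun z => (fun i => z ⟨i.1, by have := i.2; omega⟩, fun j => z (oidx k ℓ hℓk j)), ?_, ?_⟩
  · rintro ⟨a, w⟩
    refine Prod.ext ?_ ?_
    · funext i
      dsimp only
      rw [tup_lt k ℓ a w _ i.2]
    · funext j
      dsimp only
      have h1 : ¬ ((oidx k ℓ hℓk j : ℕ) < k - ℓ) := by simp only [oidx]; omega
      have h2 : ((oidx k ℓ hℓk j : ℕ)) - (k - ℓ) < ℓ := by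
        simp only [oidx]; have := j.2; omega
      rw [tup_ge k ℓ a w _ h1 h2]
      congr 1
      apply Fin.ext
      simp [oidx]
  · intro z
    funext i
    dsimp only
    rcases lt_or_ge i.1 (k - ℓ) with h | h
    · rw [tup_lt k ℓ _ _ i h]
    · have hi2 : i.1 - (k - ℓ) < ℓ := by have := i.2; omega
      rw [tup_ge k ℓ _ _ i (by omega) hi2]
      congr 1
      apply Fin.ext
      simp only [oidx]
      omega

lemma stepAB (k ℓ : ℕ) {n : ℕ} (hℓ2 : 2 ≤ ℓ) (hℓk : ℓ ≤ k) (hℓ : 1 ≤ ℓ)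
    (Hn G : Finset (Finset (Fin n))) :
    |(∑ a : Fin (k-ℓ) → Fin n, ∑ w : Fin ℓ → Fin n,
        sgnH Hn (tup k ℓ a w) * ∏ j : Fin ℓ, ufac k ℓ hℓk hℓ G j a w)
      - (k.factorial : ℝ) * (2 * (((cliqueSet k (ℓ-1) G) ∩ Hn).card : ℝ)
          - (((cliqueSet k (ℓ-1) G)).card : ℝ))|
      ≤ (k^2) * (n:ℝ)^(k-1) := by
  classical
  set A := cliqueSet k (ℓ-1) G with hA
  set Φ : (Fin k → Fin n) → ℝ := fun z => ∏ B ∈ Finset.powersetCard (ℓ-1) Finset.univ,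
    (if Finset.image z B ∈ G then (1:ℝ) else 0) with hΦ
  have hΦb : ∀ z, 0 ≤ Φ z ∧ Φ z ≤ 1 := by
    intro z
    constructor
    · apply Finset.prod_nonneg; intro B _; split <;> norm_num
    · apply Finset.prod_le_one
      · intro B _; split <;> norm_num
      · intro B _; split <;> norm_num
  have hzsum : ∑ a : Fin (k-ℓ) → Fin n, ∑ w : Fin ℓ → Fin n,
      sgnH Hn (tup k ℓ a w) * ∏ j : Fin ℓ, ufac k ℓ hℓk hℓ G j a w
      = ∑ z : Fin k → Fin n, sgnH Hn z * Φ z := by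
    rw [← Fintype.sum_prod_type']
    exact Fintype.sum_bijective _ (tup_bijective k ℓ hℓk) _ _
      (fun p => by rw [ufac_prod k ℓ hℓk hℓ G p.1 p.2])
  set ψ : Finset (Fin n) → ℝ := fun T =>
    if T ∈ A then (if T ∈ Hn then (1:ℝ) else -1) else 0 with hψ
  have hApc : A ⊆ Finset.powersetCard k Finset.univ := Finset.filter_subset _ _
  have hinjval : ∑ z ∈ Finset.univ.filter (fun z : Fin k → Fin n => Function.Injective z),
      sgnH Hn z * Φ z
      = (k.factorial : ℝ) * (2 * ((A ∩ Hn).card : ℝ) - (A.card : ℝ)) := by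
    have hcong : ∀ z ∈ Finset.univ.filter (fun z : Fin k → Fin n => Function.Injective z),
        sgnH Hn z * Φ z = ψ (Finset.image z Finset.univ) := by
      intro z hz
      have hinj := (Finset.mem_filter.mp hz).2
      rw [hΦ]
      simp only
      rw [clique_indicator k ℓ hℓ hℓk G z hinj, ← hA]
      by_cases hA1 : Finset.image z Finset.univ ∈ A
      · by_cases hH1 : Finset.image z Finset.univ ∈ Hn <;>
          simp [hψ, sgnH, hA1, hH1]
      · simp [hψ, sgnH, hA1]
    rw [Finset.sum_congr rfl hcong]
    have hmaps : ∀ z ∈ Finset.univ.filter (fun z : Fin k → Fin n => Function.Injective z),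
        Finset.image z Finset.univ ∈ Finset.powersetCard k Finset.univ := by
      intro z hz
      have hinj := (Finset.mem_filter.mp hz).2
      refine Finset.mem_powersetCard.mpr ⟨Finset.subset_univ _, ?_⟩
      rw [Finset.card_image_of_injective _ hinj, Finset.card_univ, Fintype.card_fin]
    rw [← Finset.sum_fiberwise_of_maps_to hmaps
      (fun z => ψ (Finset.image z Finset.univ))]
    have hfib : ∀ T ∈ Finset.powersetCard k Finset.univ,
        ∑ z ∈ (Finset.univ.filter (fun z : Fin k → Fin n => Function.Injective z)).filter
          (fun z => Finset.image z Finset.univ = T), ψ (Finset.image z Finset.univ)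
        = (k.factorial : ℝ) * ψ T := by
      intro T hT
      have hTcard : T.card = k := (Finset.mem_powersetCard.mp hT).2
      rw [Finset.sum_congr rfl (fun z hz => by
        rw [(Finset.mem_filter.mp hz).2])]
      rw [Finset.sum_const, Finset.filter_filter]
      rw [fiber_card k T hTcard]
      rw [nsmul_eq_mul]
    rw [Finset.sum_congr rfl hfib, ← Finset.mul_sum]
    congr 1
    have hAfilter : (Finset.powersetCard k Finset.univ).filter (fun T => T ∈ A) = A := by
      ext T
      rw [Finset.mem_filter]
      exact ⟨fun h => h.2, fun h => ⟨hApc h, h⟩⟩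
    calc ∑ T ∈ Finset.powersetCard k Finset.univ, ψ T
        = ∑ T ∈ (Finset.powersetCard k Finset.univ).filter (fun T => T ∈ A),
            (if T ∈ Hn then (1:ℝ) else -1) := by
          rw [Finset.sum_filter]
      _ = ∑ T ∈ A, (if T ∈ Hn then (1:ℝ) else -1) := by rw [hAfilter]
      _ = 2 * ((A ∩ Hn).card : ℝ) - (A.card : ℝ) := by
          rw [Finset.sum_ite, Finset.sum_const, Finset.sum_const]
          have h1 : A.filter (fun T => T ∈ Hn) = A ∩ Hn := Finset.filter_mem_eq_inter
          have h2 : (A.filter (fun T => T ∉ Hn)).card = A.card - (A ∩ Hn).card := by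
            have := Finset.card_filter_add_card_filter_not
              (s := A) (p := fun T => T ∈ Hn)
            rw [h1] at this
            omega
          rw [h1, h2]
          have hle : (A ∩ Hn).card ≤ A.card := Finset.card_le_card Finset.inter_subset_left
          rw [nsmul_eq_mul, nsmul_eq_mul, Nat.cast_sub hle]
          ring
  have hnon : |∑ z ∈ Finset.univ.filter (fun z : Fin k → Fin n => ¬ Function.Injective z),
      sgnH Hn z * Φ z| ≤ (k^2) * (n:ℝ)^(k-1) := by
    refine (Finset.abs_sum_le_sum_abs _ _).trans ?_
    have hb : ∀ z ∈ Finset.univ.filter (fun z : Fin k → Fin n => ¬ Function.Injective z),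
        |sgnH Hn z * Φ z| ≤ 1 := by
      intro z _
      rw [abs_mul]
      calc |sgnH Hn z| * |Φ z| ≤ 1 * 1 := by
            apply mul_le_mul (sgnH_abs Hn z) _ (abs_nonneg _) zero_le_one
            rw [abs_of_nonneg (hΦb z).1]
            exact (hΦb z).2
        _ = 1 := one_mul 1
    refine (Finset.sum_le_sum hb).trans ?_
    rw [Finset.sum_const, nsmul_eq_mul, mul_one]
    have := noninj_card_le (Fin k) n
    rw [Fintype.card_fin] at this
    calc ((Finset.univ.filter (fun z : Fin k → Fin n => ¬ Function.Injective z)).card : ℝ)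
        ≤ ((k^2 * n^(k-1) : ℕ) : ℝ) := by exact_mod_cast this
      _ = (k^2) * (n:ℝ)^(k-1) := by push_cast; ring
  calc |(∑ a : Fin (k-ℓ) → Fin n, ∑ w : Fin ℓ → Fin n,
        sgnH Hn (tup k ℓ a w) * ∏ j : Fin ℓ, ufac k ℓ hℓk hℓ G j a w)
      - (k.factorial : ℝ) * (2 * ((A ∩ Hn).card : ℝ) - (A.card : ℝ))|
      = |∑ z ∈ Finset.univ.filter (fun z : Fin k → Fin n => ¬ Function.Injective z),
          sgnH Hn z * Φ z| := by
        rw [hzsum, ← Finset.sum_filter_add_sum_filter_not Finset.univ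
          (fun z : Fin k → Fin n => Function.Injective z) (fun z => sgnH Hn z * Φ z),
          hinjval]
        congr 1
        ring
    _ ≤ (k^2) * (n:ℝ)^(k-1) := hnon


def semb (k ℓ : ℕ) (ε : Fin ℓ → Fin 2) (i : Fin k) : Fin (k-ℓ) ⊕ (Fin ℓ × Fin 2) :=
  if h : (i:ℕ) < k - ℓ then Sum.inl ⟨i.1, h⟩
  else
    have hi : (i : ℕ) - (k - ℓ) < ℓ := by have := i.isLt; omega
    Sum.inr (⟨(i:ℕ) - (k-ℓ), hi⟩, ε ⟨(i:ℕ) - (k-ℓ), hi⟩)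

lemma semb_injective (k ℓ : ℕ) (ε : Fin ℓ → Fin 2) : Function.Injective (semb k ℓ ε) := by
  intro i i' h
  unfold semb at h
  split at h <;> split at h
  · apply Fin.ext
    have := congrArg Fin.val (Sum.inl.injEq _ _ ▸ h : (⟨i.1, _⟩ : Fin (k-ℓ)) = ⟨i'.1, _⟩)
    exact this
  · exact absurd h (by simp)
  · exact absurd h (by simp)
  · rw [Sum.inr.injEq, Prod.mk.injEq] at h
    have := congrArg Fin.val h.1
    simp only at this
    apply Fin.ext
    omega

lemma octTuple_eq_comp (k ℓ : ℕ) {n : ℕ} (a : Fin (k-ℓ) → Fin n)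
    (yy : Fin ℓ × Fin 2 → Fin n) (ε : Fin ℓ → Fin 2) :
    octTuple k ℓ a yy ε = Sum.elim a yy ∘ semb k ℓ ε := by
  funext i
  by_cases h : (i:ℕ) < k - ℓ <;> simp [octTuple, semb, Function.comp, h]

lemma octTuple_oidx (k ℓ : ℕ) (hℓk : ℓ ≤ k) {n : ℕ} (a : Fin (k-ℓ) → Fin n)
    (yy : Fin ℓ × Fin 2 → Fin n) (ε : Fin ℓ → Fin 2) (j : Fin ℓ) :
    octTuple k ℓ a yy ε (oidx k ℓ hℓk j) = yy (j, ε j) := by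
  have h1 : ¬ ((oidx k ℓ hℓk j : ℕ) < k - ℓ) := by simp only [oidx]; omega
  rw [octTuple, dif_neg h1]
  have hj : (⟨((oidx k ℓ hℓk j : ℕ)) - (k - ℓ), by have := (oidx k ℓ hℓk j).isLt; omega⟩ : Fin ℓ)
      = j := by
    apply Fin.ext
    simp only [oidx]
    have := j.2
    omega
  exact (by rintro jj rfl; rfl :
    ∀ jj : Fin ℓ, jj = j → yy (jj, ε jj) = yy (j, ε j)) _ hj

lemma box_term_eq (k ℓ : ℕ) {n : ℕ} (hℓ2 : 2 ≤ ℓ) (hℓk : ℓ ≤ k)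
    (Hn : Finset (Finset (Fin n)))
    (a : Fin (k-ℓ) → Fin n) (yy : Fin ℓ × Fin 2 → Fin n)
    (hinj : Function.Injective (Sum.elim a yy)) :
    ∏ ε : Fin ℓ → Fin 2, sgnH Hn (octTuple k ℓ a yy ε)
      = (-1:ℝ)^((octSet k ℓ a yy ∩ Hn).card) := by
  classical
  have hℓ : 1 ≤ ℓ := by omega
  set face : (Fin ℓ → Fin 2) → Finset (Fin n) :=
    fun ε => Finset.image (octTuple k ℓ a yy ε) Finset.univ with hface
  have htinj : ∀ ε, Function.Injective (octTuple k ℓ a yy ε) := by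
    intro ε
    rw [octTuple_eq_comp]
    exact hinj.comp (semb_injective k ℓ ε)
  have hfcard : ∀ ε, (face ε).card = k := by
    intro ε
    rw [hface]
    simp only
    rw [Finset.card_image_of_injective _ (htinj ε), Finset.card_univ, Fintype.card_fin]
  have hfaceinj : Function.Injective face := by
    intro ε ε' h
    funext j
    have hmem : yy (j, ε j) ∈ face ε' := by
      rw [← h, hface]
      simp only
      rw [← octTuple_oidx k ℓ hℓk a yy ε j]
      exact Finset.mem_image_of_mem _ (Finset.mem_univ _)
    rw [hface] at hmem
    simp only [Finset.mem_image] at hmem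
    obtain ⟨i, -, hi⟩ := hmem
    rw [octTuple_eq_comp] at hi
    have hsum : semb k ℓ ε' i = Sum.inr (j, ε j) := hinj hi
    rw [semb] at hsum
    split at hsum
    · exact absurd hsum (by simp)
    · rw [Sum.inr.injEq, Prod.mk.injEq] at hsum
      obtain ⟨h1, h2⟩ := hsum
      rw [h1] at h2
      exact h2.symm
  have hoctSet : octSet k ℓ a yy = Finset.image face Finset.univ := by
    rw [octSet]
    apply Finset.filter_true_of_mem
    intro T hT
    rw [Finset.mem_image] at hT
    obtain ⟨ε, -, rfl⟩ := hT
    exact hfcard ε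
  have hcount : (octSet k ℓ a yy ∩ Hn).card
      = (Finset.univ.filter (fun ε : Fin ℓ → Fin 2 => face ε ∈ Hn)).card := by
    rw [hoctSet, ← Finset.filter_mem_eq_inter, Finset.filter_image,
      Finset.card_image_of_injective _ hfaceinj]
  have hsgn : ∀ ε, sgnH Hn (octTuple k ℓ a yy ε) = if face ε ∈ Hn then (1:ℝ) else -1 :=
    fun ε => rfl
  have hcards : (Finset.univ.filter (fun ε : Fin ℓ → Fin 2 => face ε ∈ Hn)).card
      + (Finset.univ.filter (fun ε : Fin ℓ → Fin 2 => ¬ (face ε ∈ Hn))).card = 2^ℓ := by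
    rw [Finset.card_filter_add_card_filter_not, Finset.card_univ,
      Fintype.card_fun, Fintype.card_fin, Fintype.card_fin]
  have heven : Even (2^ℓ) := ⟨2^(ℓ-1), by
    rw [← two_mul, ← pow_succ']
    congr 1
    omega⟩
  calc ∏ ε : Fin ℓ → Fin 2, sgnH Hn (octTuple k ℓ a yy ε)
      = ∏ ε : Fin ℓ → Fin 2, ((-1:ℝ)^(if face ε ∈ Hn then 0 else 1)) := by
        refine Finset.prod_congr rfl fun ε _ => ?_
        rw [hsgn ε]
        split <;> simp
    _ = (-1:ℝ)^(∑ ε : Fin ℓ → Fin 2, if face ε ∈ Hn then 0 else 1) :=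
        Finset.prod_pow_eq_pow_sum _ _ _
    _ = (-1:ℝ)^((Finset.univ.filter (fun ε : Fin ℓ → Fin 2 => ¬ (face ε ∈ Hn))).card) := by
        congr 1
        rw [Finset.sum_ite]
        simp
    _ = (-1:ℝ)^((octSet k ℓ a yy ∩ Hn).card) := by
        rw [hcount]
        set b := (Finset.univ.filter (fun ε : Fin ℓ → Fin 2 => face ε ∈ Hn)).card
        set c := (Finset.univ.filter (fun ε : Fin ℓ → Fin 2 => ¬ (face ε ∈ Hn))).card
        have h1 : (-1:ℝ)^c * (-1)^b = 1 := by
          rw [← pow_add]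
          rw [show c + b = 2^ℓ from by omega]
          exact Even.neg_one_pow heven
        have h2 : (-1:ℝ)^b * (-1)^b = 1 := by
          rw [← pow_add]
          exact Even.neg_one_pow ⟨b, rfl⟩
        calc (-1:ℝ)^c = (-1:ℝ)^c * ((-1)^b * (-1)^b) := by rw [h2, mul_one]
          _ = ((-1:ℝ)^c * (-1)^b) * (-1)^b := by ring
          _ = (-1:ℝ)^b := by rw [h1, one_mul]

lemma stepD (k ℓ : ℕ) {n : ℕ} (hℓ2 : 2 ≤ ℓ) (hℓk : ℓ ≤ k)
    (Hn : Finset (Finset (Fin n))) :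
    |(∑ a : Fin (k-ℓ) → Fin n, ∑ y : Fin ℓ → (Fin n) × (Fin n),
        ∏ δ : Fin ℓ → Bool, sgnH Hn (tup k ℓ a (corner y δ)))
      - devSum k ℓ Hn| ≤ 2 * ((k+ℓ)^2) * (n:ℝ)^(k+ℓ-1) := by
  classical
  have hre : ∀ (a : Fin (k-ℓ) → Fin n) (y : Fin ℓ → Fin n × Fin n),
      ∏ δ : Fin ℓ → Bool, sgnH Hn (tup k ℓ a (corner y δ))
        = ∏ ε : Fin ℓ → Fin 2, sgnH Hn (octTuple k ℓ a
            (fun p => if p.2 = 0 then (y p.1).1 else (y p.1).2) ε) := by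
    intro a y
    refine Fintype.prod_bijective
      (fun δ : Fin ℓ → Bool => fun j => if δ j then (1 : Fin 2) else 0) ?_ _ _ ?_
    · rw [Function.bijective_iff_has_inverse]
      refine ⟨fun ε => fun j => decide (ε j = 1), ?_, ?_⟩
      · intro δ
        funext j
        cases hδ : δ j <;> simp [hδ]
      · intro ε
        funext j
        have : ε j = 0 ∨ ε j = 1 := by omega
        rcases this with h | h <;> simp [h]
    · intro δ
      congr 1
      funext i
      rcases lt_or_ge (i:ℕ) (k-ℓ) with h | h
      · rw [tup_lt k ℓ a _ i h, octTuple, dif_pos h]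
      · have hi2 : (i:ℕ) - (k-ℓ) < ℓ := by have := i.2; omega
        rw [tup_ge k ℓ a _ i (by omega) hi2, octTuple, dif_neg (by omega)]
        simp only [corner]
        cases hδ : δ ⟨(i:ℕ)-(k-ℓ), hi2⟩ <;> simp [hδ]
  have hre2 : ∀ a : Fin (k-ℓ) → Fin n,
      ∑ y : Fin ℓ → Fin n × Fin n, ∏ ε : Fin ℓ → Fin 2,
          sgnH Hn (octTuple k ℓ a (fun p => if p.2 = 0 then (y p.1).1 else (y p.1).2) ε)
        = ∑ yy : Fin ℓ × Fin 2 → Fin n, ∏ ε : Fin ℓ → Fin 2,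
            sgnH Hn (octTuple k ℓ a yy ε) := by
    intro a
    refine Fintype.sum_bijective (fun y : Fin ℓ → Fin n × Fin n =>
      fun p : Fin ℓ × Fin 2 => if p.2 = 0 then (y p.1).1 else (y p.1).2) ?_ _ _
      (fun y => rfl)
    rw [Function.bijective_iff_has_inverse]
    refine ⟨fun yy => fun j => (yy (j,0), yy (j,1)), ?_, ?_⟩
    · intro y
      funext j
      simp
    · intro yy
      funext p
      rcases p with ⟨j, e⟩
      have : e = 0 ∨ e = 1 := by omega
      rcases this with h | h <;> simp [h]
  have hBox : (∑ a : Fin (k-ℓ) → Fin n, ∑ y : Fin ℓ → (Fin n) × (Fin n),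
        ∏ δ : Fin ℓ → Bool, sgnH Hn (tup k ℓ a (corner y δ)))
      = ∑ a : Fin (k-ℓ) → Fin n, ∑ yy : Fin ℓ × Fin 2 → Fin n,
          ∏ ε : Fin ℓ → Fin 2, sgnH Hn (octTuple k ℓ a yy ε) := by
    refine Finset.sum_congr rfl fun a _ => ?_
    rw [← hre2 a]
    exact Finset.sum_congr rfl fun y _ => hre a y
  have hdev : devSum k ℓ Hn = ∑ a : Fin (k-ℓ) → Fin n, ∑ yy : Fin ℓ × Fin 2 → Fin n,
      (-1:ℝ)^((octSet k ℓ a yy ∩ Hn).card) := rfl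
  rw [hBox, hdev, ← Finset.sum_sub_distrib]
  rw [Finset.sum_congr rfl (fun (a : Fin (k-ℓ) → Fin n) _ =>
    (Finset.sum_sub_distrib (s := (Finset.univ : Finset (Fin ℓ × Fin 2 → Fin n))) _ _).symm)]
  set d : (Fin (k-ℓ) → Fin n) → (Fin ℓ × Fin 2 → Fin n) → ℝ := fun a yy =>
    (∏ ε : Fin ℓ → Fin 2, sgnH Hn (octTuple k ℓ a yy ε))
      - (-1:ℝ)^((octSet k ℓ a yy ∩ Hn).card) with hd
  have habs : |∑ a : Fin (k-ℓ) → Fin n, ∑ yy : Fin ℓ × Fin 2 → Fin n, d a yy|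
      ≤ ∑ a : Fin (k-ℓ) → Fin n, ∑ yy : Fin ℓ × Fin 2 → Fin n, |d a yy| :=
    (Finset.abs_sum_le_sum_abs _ _).trans (Finset.sum_le_sum fun a _ =>
      Finset.abs_sum_le_sum_abs _ _)
  refine habs.trans ?_
  have hfun : ∑ a : Fin (k-ℓ) → Fin n, ∑ yy : Fin ℓ × Fin 2 → Fin n, |d a yy|
      = ∑ F : (Fin (k-ℓ) ⊕ (Fin ℓ × Fin 2)) → Fin n, |d (F ∘ Sum.inl) (F ∘ Sum.inr)| := by
    rw [← Fintype.sum_prod_type']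
    refine (Fintype.sum_bijective (fun F : (Fin (k-ℓ) ⊕ (Fin ℓ × Fin 2)) → Fin n =>
      ((F ∘ Sum.inl, F ∘ Sum.inr) : (Fin (k-ℓ) → Fin n) × (Fin ℓ × Fin 2 → Fin n)))
      ?_ _ _ (fun F => rfl)).symm
    rw [Function.bijective_iff_has_inverse]
    refine ⟨fun p => Sum.elim p.1 p.2, ?_, ?_⟩
    · intro F
      funext x
      rcases x with x | x <;> rfl
    · rintro ⟨a, yy⟩
      rfl
  rw [hfun]
  have hzero : ∀ F : (Fin (k-ℓ) ⊕ (Fin ℓ × Fin 2)) → Fin n, Function.Injective F →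
      d (F ∘ Sum.inl) (F ∘ Sum.inr) = 0 := by
    intro F hF
    rw [hd]
    simp only
    rw [box_term_eq k ℓ hℓ2 hℓk Hn _ _ (by
      have helim : Sum.elim (F ∘ Sum.inl) (F ∘ Sum.inr) = F := by
        funext x
        rcases x with x | x <;> rfl
      rw [helim]
      exact hF)]
    ring
  have hdb : ∀ F : (Fin (k-ℓ) ⊕ (Fin ℓ × Fin 2)) → Fin n,
      |d (F ∘ Sum.inl) (F ∘ Sum.inr)| ≤ 2 := by
    intro F
    rw [hd]
    simp only
    refine (abs_sub _ _).trans ?_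
    have h1 : |∏ ε : Fin ℓ → Fin 2, sgnH Hn (octTuple k ℓ (F ∘ Sum.inl) (F ∘ Sum.inr) ε)| ≤ 1 := by
      rw [Finset.abs_prod]
      refine Finset.prod_le_one (fun ε _ => abs_nonneg _) (fun ε _ => sgnH_abs _ _)
    have h2 : |(-1:ℝ)^((octSet k ℓ (F ∘ Sum.inl) (F ∘ Sum.inr) ∩ Hn).card)| ≤ 1 := by
      rw [abs_pow, abs_neg, abs_one, one_pow]
    linarith
  calc ∑ F : (Fin (k-ℓ) ⊕ (Fin ℓ × Fin 2)) → Fin n, |d (F ∘ Sum.inl) (F ∘ Sum.inr)|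
      = ∑ F ∈ Finset.univ.filter
          (fun F : (Fin (k-ℓ) ⊕ (Fin ℓ × Fin 2)) → Fin n => ¬ Function.Injective F),
          |d (F ∘ Sum.inl) (F ∘ Sum.inr)| := by
        rw [← Finset.sum_filter_add_sum_filter_not Finset.univ
          (fun F : (Fin (k-ℓ) ⊕ (Fin ℓ × Fin 2)) → Fin n => Function.Injective F)]
        rw [Finset.sum_eq_zero (fun F hF => by
          rw [hzero F (Finset.mem_filter.mp hF).2, abs_zero]), zero_add]
    _ ≤ ∑ F ∈ Finset.univ.filter
          (fun F : (Fin (k-ℓ) ⊕ (Fin ℓ × Fin 2)) → Fin n => ¬ Function.Injective F), 2 := by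
        exact Finset.sum_le_sum fun F _ => hdb F
    _ ≤ 2 * ((k+ℓ)^2) * (n:ℝ)^(k+ℓ-1) := by
        rw [Finset.sum_const, nsmul_eq_mul]
        have hcard := noninj_card_le (Fin (k-ℓ) ⊕ (Fin ℓ × Fin 2)) n
        have hcardι : Fintype.card (Fin (k-ℓ) ⊕ (Fin ℓ × Fin 2)) = k + ℓ := by
          rw [Fintype.card_sum, Fintype.card_prod, Fintype.card_fin, Fintype.card_fin,
            Fintype.card_fin]
          omega
        rw [hcardι] at hcard
        calc ((Finset.univ.filter
              (fun F : (Fin (k-ℓ) ⊕ (Fin ℓ × Fin 2)) → Fin n => ¬ Function.Injective F)).card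
                : ℝ) * 2
            ≤ (((k+ℓ)^2 * n^(k+ℓ-1) : ℕ) : ℝ) * 2 := by
              have : ((Finset.univ.filter
                (fun F : (Fin (k-ℓ) ⊕ (Fin ℓ × Fin 2)) → Fin n =>
                  ¬ Function.Injective F)).card : ℝ) ≤ (((k+ℓ)^2 * n^(k+ℓ-1) : ℕ) : ℝ) := by
                exact_mod_cast hcard
              linarith
          _ = 2 * ((k+ℓ)^2) * (n:ℝ)^(k+ℓ-1) := by push_cast; ring


lemma poly_eventually (C : ℝ) (c : ℝ) (hc : 0 < c) (m : ℕ) :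
    ∀ᶠ n : ℕ in Filter.atTop, C * (n:ℝ)^m ≤ c * (n:ℝ)^(m+1) := by
  filter_upwards [Filter.eventually_ge_atTop ⌈C/c⌉₊] with n hn
  have h1 : C/c ≤ (n:ℝ) := le_trans (Nat.le_ceil _) (by exact_mod_cast hn)
  have h2 : C ≤ (n:ℝ) * c := by rwa [div_le_iff₀ hc] at h1
  calc C * (n:ℝ)^m ≤ (c*(n:ℝ)) * (n:ℝ)^m := by
        apply mul_le_mul_of_nonneg_right (by linarith) (by positivity)
    _ = c * (n:ℝ)^(m+1) := by ring

end App

/-- `Dev(ℓ)` implies `CD_{1/2}(ℓ-1)` for `2 ≤ ℓ ≤ k`. -/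
theorem dev_implies_cd_pred (k ℓ : ℕ) (hk : 2 ≤ k) (hℓ2 : 2 ≤ ℓ) (hℓk : ℓ ≤ k)
    (H : HSeq) (hH : UniformSeq k H) (h : Dev k ℓ H) :
    CD k (1/2 : ℝ) (ℓ - 1) H := by
  classical
  have hℓ : 1 ≤ ℓ := by omega
  have hkfpos : (0:ℝ) < (k.factorial : ℝ) := by
    exact_mod_cast Nat.factorial_pos k
  set q : ℕ := 2^ℓ with hq
  have hqpos : 0 < q := Nat.two_pow_pos ℓ
  have hq0 : ((q:ℕ):ℝ) ≠ 0 := Nat.cast_ne_zero.mpr hqpos.ne'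
  set E : ℕ := (k-ℓ)*(2^ℓ-1) + (ℓ*2^ℓ - 2*ℓ) with hE
  set g : ℕ → ℝ := fun n => |devSum k ℓ (H n)| + 2*((k+ℓ)^2) * (n:ℝ)^(k+ℓ-1) with hg
  have hg0 : ∀ n, 0 ≤ g n := fun n => add_nonneg (abs_nonneg _) (by positivity)
  set f : ℕ → ℝ := fun n => (1/(2*(k.factorial:ℝ))) *
    (((n:ℝ)^E * g n) ^ ((q:ℝ)⁻¹) + (k^2) * (n:ℝ)^(k-1)) with hf
  have hf0 : ∀ n, 0 ≤ f n := by
    intro n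
    rw [hf]
    have h1 : (0:ℝ) ≤ ((n:ℝ)^E * g n) ^ ((q:ℝ)⁻¹) :=
      Real.rpow_nonneg (mul_nonneg (by positivity) (hg0 n)) _
    have h2 : (0:ℝ) ≤ ((k:ℝ)^2) * (n:ℝ)^(k-1) := by positivity
    have h3 : (0:ℝ) < 1/(2*(k.factorial:ℝ)) := by positivity
    simp only
    push_cast
    nlinarith
  have hEq : E + (k+ℓ) = k * q := by
    have h1t : 1 ≤ 2^ℓ := Nat.one_le_two_pow
    have e1 : (k-ℓ)*(2^ℓ-1) + (k-ℓ)*1 = (k-ℓ)*2^ℓ := by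
      rw [← Nat.mul_add]
      congr 1
      omega
    have e2 : 2*ℓ ≤ ℓ*2^ℓ := by
      have h2 : 2 ≤ 2^ℓ := by
        have := Nat.one_lt_two_pow_iff.mpr (by omega : ℓ ≠ 0)
        omega
      calc 2*ℓ = ℓ*2 := by ring
        _ ≤ ℓ*2^ℓ := Nat.mul_le_mul (le_refl ℓ) h2
    have e3 : (k-ℓ)*2^ℓ + ℓ*2^ℓ = k*2^ℓ := by
      rw [← Nat.add_mul]
      congr 1
      omega
    rw [hE, hq]
    omega
  refine ⟨f, ?_, ?_⟩
  · -- f = o(n^k)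
    rw [Asymptotics.isLittleO_iff]
    intro c hc
    set c1 : ℝ := (k.factorial:ℝ) * c with hc1
    have hc1pos : 0 < c1 := mul_pos hkfpos hc
    have hk1 : k - 1 + 1 = k := by omega
    have hkl1 : k + ℓ - 1 + 1 = k + ℓ := by omega
    have hev2 : ∀ᶠ n : ℕ in Filter.atTop, ((k:ℝ)^2) * (n:ℝ)^(k-1) ≤ c1 * (n:ℝ)^k := by
      filter_upwards [poly_eventually ((k:ℝ)^2) c1 hc1pos (k-1)] with n hn
      rwa [hk1] at hn
    have hgev : ∀ᶠ n : ℕ in Filter.atTop, g n ≤ (c1^q) * (n:ℝ)^(k+ℓ) := by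
      have hdev := (Asymptotics.isLittleO_iff.mp h) (show (0:ℝ) < c1^q/2 by positivity)
      have hpoly : ∀ᶠ n : ℕ in Filter.atTop,
          (2*((k+ℓ):ℝ)^2) * (n:ℝ)^(k+ℓ-1) ≤ (c1^q/2) * (n:ℝ)^(k+ℓ) := by
        filter_upwards [poly_eventually (2*((k+ℓ):ℝ)^2) (c1^q/2) (by positivity) (k+ℓ-1)]
          with n hn
        rwa [hkl1] at hn
      filter_upwards [hdev, hpoly] with n h1 h2
      rw [hg]
      simp only [Real.norm_eq_abs] at h1
      rw [abs_of_nonneg (by positivity : (0:ℝ) ≤ (n:ℝ)^(k+ℓ))] at h1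
      push_cast
      push_cast at h2
      nlinarith [hg0 n]
    have hev1 : ∀ᶠ n : ℕ in Filter.atTop,
        ((n:ℝ)^E * g n) ^ ((q:ℝ)⁻¹) ≤ c1 * (n:ℝ)^k := by
      filter_upwards [hgev] with n hn
      calc ((n:ℝ)^E * g n)^((q:ℝ)⁻¹)
          ≤ ((n:ℝ)^E * ((c1^q) * (n:ℝ)^(k+ℓ)))^((q:ℝ)⁻¹) := by
            apply Real.rpow_le_rpow (mul_nonneg (by positivity) (hg0 n))
              (mul_le_mul_of_nonneg_left hn (by positivity)) (by positivity)
        _ = (c1^q * (n:ℝ)^(k*q))^((q:ℝ)⁻¹) := by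
            rw [show (n:ℝ)^E * ((c1^q) * (n:ℝ)^(k+ℓ)) = c1^q * (n:ℝ)^(E+(k+ℓ)) from by
              rw [pow_add]; ring, hEq]
        _ = c1 * (n:ℝ)^k := by
            rw [Real.mul_rpow (by positivity) (by positivity)]
            congr 1
            · rw [← Real.rpow_natCast c1 q, ← Real.rpow_mul (le_of_lt hc1pos),
                mul_inv_cancel₀ hq0, Real.rpow_one]
            · rw [show (n:ℝ)^(k*q) = ((n:ℝ)^k)^q from by rw [pow_mul],
                ← Real.rpow_natCast ((n:ℝ)^k) q, ← Real.rpow_mul (by positivity),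
                mul_inv_cancel₀ hq0, Real.rpow_one]
    filter_upwards [hev1, hev2] with n h1 h2
    rw [Real.norm_eq_abs, Real.norm_eq_abs, abs_of_nonneg (hf0 n),
      abs_of_nonneg (by positivity : (0:ℝ) ≤ (n:ℝ)^k), hf]
    simp only
    have hc1c : 1/(2*(k.factorial:ℝ)) * (c1 * (n:ℝ)^k + c1 * (n:ℝ)^k) = c * (n:ℝ)^k := by
      rw [hc1]
      field_simp
      ring
    calc 1/(2*(k.factorial:ℝ)) * (((n:ℝ)^E * g n) ^ ((q:ℝ)⁻¹) + (k^2) * (n:ℝ)^(k-1))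
        ≤ 1/(2*(k.factorial:ℝ)) * (c1 * (n:ℝ)^k + c1 * (n:ℝ)^k) := by
          have hcoef : (0:ℝ) ≤ 1/(2*(k.factorial:ℝ)) := by positivity
          apply mul_le_mul_of_nonneg_left _ hcoef
          push_cast
          push_cast at h2
          linarith
      _ = c * (n:ℝ)^k := hc1c
  · -- per-n bound
    intro n G hG
    have hstepAB := stepAB k ℓ hℓ2 hℓk hℓ (H n) G
    have hstepD := stepD k ℓ hℓ2 hℓk (H n)
    have hgcs := gcs (Fin n) ℓ (Fin (k-ℓ) → Fin n)
      (fun a w => sgnH (H n) (tup k ℓ a w))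
      (fun j a w => ufac k ℓ hℓk hℓ G j a w)
      (fun a w => sgnH_abs _ _)
      (fun j a w => ufac_bounds k ℓ hℓk hℓ G j a w)
      (fun j a w w' hw => ufac_indep k ℓ hℓk hℓ G j a w w' hw)
    try dsimp only at hgcs
    have hcoef : (Fintype.card (Fin (k-ℓ) → Fin n) : ℝ)^(2^ℓ - 1) *
        (Fintype.card (Fin n):ℝ)^(ℓ*2^ℓ - 2*ℓ) = (n:ℝ)^E := by
      rw [Fintype.card_fun, Fintype.card_fin, Fintype.card_fin]
      push_cast
      rw [← pow_mul, ← pow_add, hE]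
    rw [hcoef] at hgcs
    set S := ∑ a : Fin (k-ℓ) → Fin n, ∑ w : Fin ℓ → Fin n,
      sgnH (H n) (tup k ℓ a w) * ∏ j : Fin ℓ, ufac k ℓ hℓk hℓ G j a w with hS
    set Bx := ∑ a : Fin (k-ℓ) → Fin n, ∑ y : Fin ℓ → Fin n × Fin n,
      ∏ δ : Fin ℓ → Bool, sgnH (H n) (tup k ℓ a (corner y δ)) with hBx
    have hBle : |Bx| ≤ g n := by
      calc |Bx| = |(Bx - devSum k ℓ (H n)) + devSum k ℓ (H n)| := by ring_nf
        _ ≤ |Bx - devSum k ℓ (H n)| + |devSum k ℓ (H n)| := abs_add_le _ _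
        _ ≤ 2*((k+ℓ)^2) * (n:ℝ)^(k+ℓ-1) + |devSum k ℓ (H n)| := by
            have := hstepD
            push_cast at this ⊢
            linarith
        _ = g n := by rw [hg]; push_cast; ring
    have hSq : |S|^q ≤ (n:ℝ)^E * g n := by
      calc |S|^q ≤ (n:ℝ)^E * |Bx| := hgcs
        _ ≤ (n:ℝ)^E * g n := mul_le_mul_of_nonneg_left hBle (by positivity)
    have hSle : |S| ≤ ((n:ℝ)^E * g n) ^ ((q:ℝ)⁻¹) := by
      calc |S| = ((|S|^q : ℝ)) ^ ((q:ℝ)⁻¹) := by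
            rw [← Real.rpow_natCast |S| q, ← Real.rpow_mul (abs_nonneg S),
              mul_inv_cancel₀ hq0, Real.rpow_one]
        _ ≤ ((n:ℝ)^E * g n) ^ ((q:ℝ)⁻¹) :=
            Real.rpow_le_rpow (by positivity) hSq (by positivity)
    set cA := (((cliqueSet k (ℓ-1) G) ∩ H n).card : ℝ) with hcA
    set aA := (((cliqueSet k (ℓ-1) G)).card : ℝ) with haA
    have hX : (k.factorial:ℝ) * |2*cA - aA|
        ≤ ((n:ℝ)^E * g n) ^ ((q:ℝ)⁻¹) + (k^2) * (n:ℝ)^(k-1) := by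
      have h1 : |(k.factorial:ℝ) * (2*cA - aA)|
          ≤ |S| + (k^2) * (n:ℝ)^(k-1) := by
        calc |(k.factorial:ℝ) * (2*cA - aA)|
            = |S - (S - (k.factorial:ℝ) * (2*cA - aA))| := by ring_nf
          _ ≤ |S| + |S - (k.factorial:ℝ) * (2*cA - aA)| := abs_sub _ _
          _ ≤ |S| + (k^2) * (n:ℝ)^(k-1) := by
              have := hstepAB
              push_cast at this ⊢
              linarith
      rw [abs_mul, abs_of_nonneg (le_of_lt hkfpos)] at h1
      push_cast at h1 ⊢
      linarith
    have hgoal : |cA - 1/2 * aA| = (1/2) * |2*cA - aA| := by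
      rw [show cA - 1/2*aA = (1/2) * (2*cA - aA) from by ring, abs_mul,
        abs_of_nonneg (by norm_num : (0:ℝ) ≤ 1/2)]
    rw [hgoal, hf]
    simp only
    have h2 : |2*cA - aA| ≤ (1/(k.factorial:ℝ)) *
        (((n:ℝ)^E * g n) ^ ((q:ℝ)⁻¹) + (k^2) * (n:ℝ)^(k-1)) := by
      rw [show (1/(k.factorial:ℝ)) *
          (((n:ℝ)^E * g n) ^ ((q:ℝ)⁻¹) + (k^2) * (n:ℝ)^(k-1))
          = (((n:ℝ)^E * g n) ^ ((q:ℝ)⁻¹) + (k^2) * (n:ℝ)^(k-1)) / (k.factorial:ℝ) from by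
        ring]
      rw [le_div_iff₀ hkfpos]
      push_cast
      push_cast at hX
      linarith
    calc (1/2) * |2*cA - aA|
        ≤ (1/2) * ((1/(k.factorial:ℝ)) *
            (((n:ℝ)^E * g n) ^ ((q:ℝ)⁻¹) + (k^2) * (n:ℝ)^(k-1))) := by
          apply mul_le_mul_of_nonneg_left h2 (by norm_num)
      _ = 1/(2*(k.factorial:ℝ)) *
            (((n:ℝ)^E * g n) ^ ((q:ℝ)⁻¹) + (k^2) * (n:ℝ)^(k-1)) := by
          field_simp
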